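/- Let M be a positive (10,4)-reverse multiple. Then there exist an integer i ≥ 1 and nonnegative integers l_1, …, l_i and m_1, …, m_i such that, writing C_j for the digit block '21' followed by l_j nines followed by '78' and Z_j for a block of m_j zeros, the big-endian decimal digit string of M is either the palindromic concatenation C_1 Z_1 C_2 Z_2 … C_{i-1} Z_{i-1} C_i Z_i C_i Z_{i-1} C_{i-1} … Z_1 C_1 (with 2i blocks C and central zero block Z_i) or the palindromic concatenation C_1 Z_1 … C_{i-1} Z_{i-1} C_i Z_{i-1} C_{i-1} … Z_1 C_1 (with 2i−1 blocks C and central block C_i). -/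

import Mathlib

/-- The big-endian digit block `21 9…9 78` with `l` nines. -/
def cBlock4 (l : ℕ) : List ℕ := [2, 1] ++ List.replicate l 9 ++ [7, 8]

/-- A block of `m` zero digits. -/
def zBlock (m : ℕ) : List ℕ := List.replicate m 0

/-- The big-endian digit string
`C_1 Z_1 … C_{i-1} Z_{i-1} C_i Z_i C_i Z_{i-1} C_{i-1} … Z_1 C_1`
(with `2 * i` blocks `C` and central zero block `Z_i`), where `C_j` is the block
`21 9…9 78` with `l j` nines and `Z_j` is a block of `m j` zeros (indices `1, …, i`). -/
def evenString4 (i : ℕ) (l m : ℕ → ℕ) : List ℕ :=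
  ((List.range i).map fun j => cBlock4 (l (j + 1)) ++ zBlock (m (j + 1))).flatten ++
    cBlock4 (l i) ++
    (((List.range (i - 1)).map fun j =>
        zBlock (m (j + 1)) ++ cBlock4 (l (j + 1))).reverse).flatten

/-- The big-endian digit string
`C_1 Z_1 … C_{i-1} Z_{i-1} C_i Z_{i-1} C_{i-1} … Z_1 C_1`
(with `2 * i - 1` blocks `C` and central block `C_i`). -/
def oddString4 (i : ℕ) (l m : ℕ → ℕ) : List ℕ :=
  ((List.range (i - 1)).map fun j => cBlock4 (l (j + 1)) ++ zBlock (m (j + 1))).flatten ++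
    cBlock4 (l i) ++
    (((List.range (i - 1)).map fun j =>
        zBlock (m (j + 1)) ++ cBlock4 (l (j + 1))).reverse).flatten


def cond4 (u v : ℕ) (L : List ℕ) : Prop :=
  4 * Nat.ofDigits 10 L + u = Nat.ofDigits 10 L.reverse + v * 10 ^ L.length

lemma cond4_peel (u v a b : ℕ) (mid : List ℕ) :
    cond4 u v (a :: (mid ++ [b])) ↔
      4 * (a + 10 * (Nat.ofDigits 10 mid + 10 ^ mid.length * b)) + u =
        (b + 10 * (Nat.ofDigits 10 mid.reverse + 10 ^ mid.length * a)) + v * (100 * 10 ^ mid.length) := by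
  unfold cond4
  have h1 : Nat.ofDigits 10 (a :: (mid ++ [b])) =
      a + 10 * (Nat.ofDigits 10 mid + 10 ^ mid.length * b) := by
    rw [Nat.ofDigits_cons, Nat.ofDigits_append, Nat.ofDigits_singleton]
  have h2 : (a :: (mid ++ [b])).reverse = b :: (mid.reverse ++ [a]) := by simp
  have h3 : Nat.ofDigits 10 (b :: (mid.reverse ++ [a])) =
      b + 10 * (Nat.ofDigits 10 mid.reverse + 10 ^ mid.length * a) := by
    rw [Nat.ofDigits_cons, Nat.ofDigits_append, Nat.ofDigits_singleton, List.length_reverse]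
  have h4 : (10:ℕ) ^ (a :: (mid ++ [b])).length = 100 * 10 ^ mid.length := by
    simp [List.length_append, pow_succ]; ring
  rw [h1, h2, h3, h4]

section peels
variable {a b : ℕ} {mid : List ℕ}

lemma peel_facts (hmid : ∀ d ∈ mid, d < 10) :
    Nat.ofDigits 10 mid < 10 ^ mid.length ∧
      Nat.ofDigits 10 mid.reverse < 10 ^ mid.length ∧ 0 < 10 ^ mid.length :=
  ⟨Nat.ofDigits_lt_base_pow_length (by norm_num) hmid,
   by
      have := Nat.ofDigits_lt_base_pow_length (b := 10) (l := mid.reverse) (by norm_num)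
        (fun x hx => hmid x (List.mem_reverse.mp hx))
      simpa using this,
   pow_pos (by norm_num) _⟩

lemma peel00 (ha : a < 10) (hb : b < 10) (hmid : ∀ d ∈ mid, d < 10)
    (h : cond4 0 0 (a :: (mid ++ [b]))) :
    (a = 0 ∧ b = 0 ∧ cond4 0 0 mid) ∨ (a = 8 ∧ b = 2 ∧ cond4 3 0 mid) := by
  rw [cond4_peel] at h
  obtain ⟨hV, hV', hP⟩ := peel_facts hmid
  simp only [cond4, List.length_reverse]
  set V := Nat.ofDigits 10 mid
  set V' := Nat.ofDigits 10 mid.reverse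
  set P := 10 ^ mid.length
  interval_cases a <;> interval_cases b <;> omega

lemma peel30 (ha : a < 10) (hb : b < 10) (hmid : ∀ d ∈ mid, d < 10)
    (h : cond4 3 0 (a :: (mid ++ [b]))) :
    a = 7 ∧ b = 1 ∧ cond4 3 3 mid := by
  rw [cond4_peel] at h
  obtain ⟨hV, hV', hP⟩ := peel_facts hmid
  simp only [cond4, List.length_reverse]
  set V := Nat.ofDigits 10 mid
  set V' := Nat.ofDigits 10 mid.reverse
  set P := 10 ^ mid.length
  interval_cases a <;> interval_cases b <;> omega

lemma peel33 (ha : a < 10) (hb : b < 10) (hmid : ∀ d ∈ mid, d < 10)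
    (h : cond4 3 3 (a :: (mid ++ [b]))) :
    (a = 9 ∧ b = 9 ∧ cond4 3 3 mid) ∨ (a = 1 ∧ b = 7 ∧ cond4 0 3 mid) := by
  rw [cond4_peel] at h
  obtain ⟨hV, hV', hP⟩ := peel_facts hmid
  simp only [cond4, List.length_reverse]
  set V := Nat.ofDigits 10 mid
  set V' := Nat.ofDigits 10 mid.reverse
  set P := 10 ^ mid.length
  interval_cases a <;> interval_cases b <;> omega

lemma peel03 (ha : a < 10) (hb : b < 10) (hmid : ∀ d ∈ mid, d < 10)
    (h : cond4 0 3 (a :: (mid ++ [b]))) :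
    a = 2 ∧ b = 8 ∧ cond4 0 0 mid := by
  rw [cond4_peel] at h
  obtain ⟨hV, hV', hP⟩ := peel_facts hmid
  simp only [cond4, List.length_reverse]
  set V := Nat.ofDigits 10 mid
  set V' := Nat.ofDigits 10 mid.reverse
  set P := 10 ^ mid.length
  interval_cases a <;> interval_cases b <;> omega

end peels

lemma oddString4_one (l m : ℕ → ℕ) : oddString4 1 l m = cBlock4 (l 1) := by
  simp [oddString4]

lemma evenString4_one (l m : ℕ → ℕ) :
    evenString4 1 l m = cBlock4 (l 1) ++ zBlock (m 1) ++ cBlock4 (l 1) := by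
  simp [evenString4, List.range_succ]

lemma evenString4_wrap (i : ℕ) (hi : 1 ≤ i) (l m : ℕ → ℕ) (a b : ℕ) :
    ∃ l' m' : ℕ → ℕ,
      cBlock4 a ++ zBlock b ++ evenString4 i l m ++ zBlock b ++ cBlock4 a =
        evenString4 (i + 1) l' m' := by
  obtain ⟨i, rfl⟩ := Nat.exists_eq_add_of_le hi
  refine ⟨fun t => if t = 1 then a else l (t - 1), fun t => if t = 1 then b else m (t - 1), ?_⟩
  simp only [evenString4, Nat.add_sub_cancel, List.range_succ_eq_map, List.map_cons,
    List.map_map, List.flatten_cons, List.reverse_cons, List.flatten_append,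
    List.flatten_cons, List.flatten_nil]
  simp only [Function.comp_def]
  norm_num
  rw [show 1 + i = i + 1 by ring, List.range_succ_eq_map]
  simp only [List.map_cons, List.map_map, List.reverse_cons, List.flatten_append,
    List.flatten_cons, List.flatten_nil, Function.comp_def]
  simp

lemma oddString4_wrap (i : ℕ) (hi : 1 ≤ i) (l m : ℕ → ℕ) (a b : ℕ) :
    ∃ l' m' : ℕ → ℕ,
      cBlock4 a ++ zBlock b ++ oddString4 i l m ++ zBlock b ++ cBlock4 a =
        oddString4 (i + 1) l' m' := by
  obtain ⟨i, rfl⟩ := Nat.exists_eq_add_of_le hi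
  refine ⟨fun t => if t = 1 then a else l (t - 1), fun t => if t = 1 then b else m (t - 1), ?_⟩
  simp only [oddString4, Nat.add_sub_cancel, Nat.add_sub_cancel_left]
  rw [if_neg (by omega : ¬ (1 + i + 1 = 1)), show 1 + i = i + 1 by ring,
    List.range_succ_eq_map]
  simp only [List.map_cons, List.map_map, List.flatten_cons, List.reverse_cons,
    List.flatten_append, List.flatten_cons, List.flatten_nil, Function.comp_def]
  norm_num

def GoodStr (s : List ℕ) : Prop :=
  ∃ i l m, 1 ≤ i ∧ (s = evenString4 i l m ∨ s = oddString4 i l m)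

def Mid00 (s : List ℕ) : Prop :=
  (∃ k, s = zBlock k) ∨ ∃ k g, GoodStr g ∧ s = zBlock k ++ g ++ zBlock k

def Mid33 (s : List ℕ) : Prop :=
  (∃ j, s = List.replicate j 9) ∨
    ∃ j c, Mid00 c ∧
      s = List.replicate j 9 ++ [7, 8] ++ c ++ [2, 1] ++ List.replicate j 9

lemma key (s : List ℕ) (hs : Mid33 s) : GoodStr ([2, 1] ++ s ++ [7, 8]) := by
  rcases hs with ⟨j, rfl⟩ | ⟨j, c, hc, rfl⟩
  · exact ⟨1, fun _ => j, fun _ => 0, le_refl 1,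
      Or.inr (by rw [oddString4_one]; simp [cBlock4])⟩
  · have hshape : [2,1] ++ (List.replicate j 9 ++ [7,8] ++ c ++ [2,1] ++ List.replicate j 9) ++ [7,8]
        = cBlock4 j ++ c ++ cBlock4 j := by simp [cBlock4]
    rw [hshape]
    rcases hc with ⟨k, rfl⟩ | ⟨k, g, ⟨i, l, m, hi, hg⟩, rfl⟩
    · exact ⟨1, fun _ => j, fun _ => k, le_refl 1,
        Or.inl (by rw [evenString4_one])⟩
    · rcases hg with rfl | rfl
      · obtain ⟨l', m', h⟩ := evenString4_wrap i hi l m j k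
        exact ⟨i + 1, l', m', by omega, Or.inl (by rw [← h]; simp)⟩
      · obtain ⟨l', m', h⟩ := oddString4_wrap i hi l m j k
        exact ⟨i + 1, l', m', by omega, Or.inr (by rw [← h]; simp)⟩

lemma rep_snoc (k x : ℕ) : List.replicate k x ++ [x] = x :: List.replicate k x :=
  by rw [← List.replicate_succ', List.replicate_succ]

lemma rev_peel (a b : ℕ) (mid : List ℕ) :
    (a :: (mid ++ [b])).reverse = b :: (mid.reverse ++ [a]) := by simp

lemma main4 : ∀ n (L : List ℕ), L.length = n → (∀ d ∈ L, d < 10) →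
    (cond4 0 0 L → Mid00 L.reverse) ∧
    (cond4 3 3 L → Mid33 L.reverse) ∧
    (cond4 3 0 L → ∃ s, Mid33 s ∧ L.reverse = 1 :: (s ++ [7])) ∧
    (cond4 0 3 L → ∃ c, Mid00 c ∧ L.reverse = 8 :: (c ++ [2])) := by
  intro n
  induction n using Nat.strong_induction_on with
  | _ n ih =>
    intro L hlen hd
    match L with
    | [] =>
      refine ⟨fun _ => Or.inl ⟨0, rfl⟩, fun _ => Or.inl ⟨0, rfl⟩, fun h => ?_, fun h => ?_⟩
      · simp [cond4, Nat.ofDigits_nil] at h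
      · simp [cond4, Nat.ofDigits_nil] at h
    | [a] =>
      have hc : ∀ u v : ℕ, cond4 u v [a] ↔ 4 * a + u = a + v * 10 := by
        intro u v; simp [cond4, Nat.ofDigits_singleton]
      refine ⟨fun h => ?_, fun h => ?_, fun h => ?_, fun h => ?_⟩
      · rw [hc] at h
        have : a = 0 := by omega
        subst this
        exact Or.inl ⟨1, rfl⟩
      · rw [hc] at h
        have : a = 9 := by omega
        subst this
        exact Or.inl ⟨1, rfl⟩
      · rw [hc] at h; omega
      · rw [hc] at h
        have ha := hd a (by simp)
        omega
    | a :: x :: rest =>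
      obtain ⟨mid, b, hmb⟩ : ∃ mid b, x :: rest = mid ++ [b] := by
        rcases (x :: rest).eq_nil_or_concat' with h | h
        · simp at h
        · exact h
      rw [hmb]
      rw [hmb] at hd hlen
      have ha : a < 10 := hd a (by simp)
      have hb : b < 10 := hd b (by simp)
      have hmid : ∀ d ∈ mid, d < 10 := fun d hdm => hd d (by simp [hdm])
      have hlt : mid.length < n := by
        simp [List.length_append] at hlen; omega
      obtain ⟨ih00, ih33, ih30, ih03⟩ := ih mid.length hlt mid rfl hmid
      rw [rev_peel]
      refine ⟨fun h => ?_, fun h => ?_, fun h => ?_, fun h => ?_⟩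
      · rcases peel00 ha hb hmid h with ⟨rfl, rfl, hm⟩ | ⟨rfl, rfl, hm⟩
        · rcases ih00 hm with ⟨k, hk⟩ | ⟨k, g, hg, hk⟩
          · exact Or.inl ⟨k + 2, by simp [hk, zBlock, List.replicate_succ,
              List.replicate_succ' (n := k + 1), rep_snoc]⟩
          · refine Or.inr ⟨k + 1, g, hg, ?_⟩
            simp [hk, zBlock, List.replicate_succ, List.replicate_succ' (n := k), rep_snoc]
        · obtain ⟨s, hs, hmidrev⟩ := ih30 hm
          refine Or.inr ⟨0, [2, 1] ++ s ++ [7, 8], key s hs, ?_⟩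
          simp [hmidrev, zBlock]
      · rcases peel33 ha hb hmid h with ⟨rfl, rfl, hm⟩ | ⟨rfl, rfl, hm⟩
        · rcases ih33 hm with ⟨j, hj⟩ | ⟨j, c, hc, hj⟩
          · exact Or.inl ⟨j + 2, by simp [hj, List.replicate_succ,
              List.replicate_succ' (n := j + 1), rep_snoc]⟩
          · refine Or.inr ⟨j + 1, c, hc, ?_⟩
            simp [hj, List.replicate_succ, List.replicate_succ' (n := j), rep_snoc]
        · obtain ⟨c, hc, hmidrev⟩ := ih03 hm
          refine Or.inr ⟨0, c, hc, ?_⟩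
          simp [hmidrev]
      · obtain ⟨rfl, rfl, hm⟩ := peel30 ha hb hmid h
        exact ⟨mid.reverse, ih33 hm, rfl⟩
      · obtain ⟨rfl, rfl, hm⟩ := peel03 ha hb hmid h
        exact ⟨mid.reverse, ih00 hm, rfl⟩

theorem stmt_16 (M : ℕ) (hM : 0 < M)
    (hrev : (Nat.digits 10 M).reverse = Nat.digits 10 (4 * M)) :
    ∃ i : ℕ, 1 ≤ i ∧ ∃ l m : ℕ → ℕ,
      (Nat.digits 10 M).reverse = evenString4 i l m ∨
      (Nat.digits 10 M).reverse = oddString4 i l m := by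
  set L := Nat.digits 10 M with hL
  have hd : ∀ d ∈ L, d < 10 := fun d hdm => Nat.digits_lt_base (by norm_num) hdm
  have h00 : cond4 0 0 L := by
    unfold cond4
    rw [hrev, hL, Nat.ofDigits_digits, Nat.ofDigits_digits]
    ring
  have hne : L ≠ [] := Nat.digits_ne_nil_iff_ne_zero.mpr hM.ne'
  have hzero : ∀ t : List ℕ, L.reverse ≠ 0 :: t := by
    intro t ht
    have h1 : L.getLast? = some 0 := by rw [← List.head?_reverse, ht]; rfl
    rw [List.getLast?_eq_getLast hne] at h1
    have h2 : L.getLast hne ≠ 0 := Nat.getLast_digit_ne_zero 10 hM.ne'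
    exact h2 (Option.some_injective _ h1)
  rcases (main4 L.length L rfl hd).1 h00 with ⟨k, hk⟩ | ⟨k, g, ⟨i, l, m, hi, hg⟩, hk⟩
  · match k with
    | 0 =>
      simp only [zBlock, List.replicate_zero] at hk
      exact absurd (by simpa using congrArg List.reverse hk) hne
    | k + 1 =>
      rw [zBlock, List.replicate_succ] at hk
      exact absurd hk (hzero _)
  · match k with
    | 0 =>
      simp only [zBlock, List.replicate_zero, List.nil_append, List.append_nil] at hk
      rcases hg with rfl | rfl
      · exact ⟨i, hi, l, m, Or.inl hk⟩
      · exact ⟨i, hi, l, m, Or.inr hk⟩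
    | k + 1 =>
      rw [zBlock, List.replicate_succ] at hk
      refine absurd ?_ (hzero (List.replicate k 0 ++ g ++ zBlock (k + 1)))
      rw [hk]; simp [zBlock, List.replicate_succ]
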